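/- Let k ≥ 1 and let f(q) = a₀ + a₁·q + q²·p(q), where a₀, a₁ ∈ ℝ and p is a real polynomial of degree at most k − 2. Then there exists q₀ ∈ {0, 1/k, 2/k, …, 1} such that |f(q₀)| ≥ |a₁| / 2^{3k²}. -/

import Mathlib

open scoped BigOperators

namespace GraphDisc

/-- A `k`-distinguisher is symmetric: invariant under all permutations of arguments. -/
def IsSymmetric {V : Type*} {k : ℕ} (g : (Fin k → V) → Bool) : Prop :=
  ∀ (σ : Equiv.Perm (Fin k)) (w : Fin k → V), g (w ∘ σ) = g w

/-- A `k`-distinguishing class: a family of symmetric Boolean `k`-ary functions. -/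
def IsDistinguishingClass {V : Type*} {k : ℕ} (G : Set ((Fin k → V) → Bool)) : Prop :=
  ∀ g ∈ G, IsSymmetric g

/-- `p` is a probability distribution on `V` (as a mass function). -/
def IsDist {V : Type*} (p : V → ℝ) : Prop := (∀ v, 0 ≤ p v) ∧ HasSum p 1

/-- `L_P(g)`: expected value of `g` on a `k`-tuple of i.i.d. samples from `p`. -/
noncomputable def LP {V : Type*} {k : ℕ} (p : V → ℝ) (g : (Fin k → V) → Bool) : ℝ :=
  ∑' w : Fin k → V, (∏ i, p (w i)) * (if g w then 1 else 0)

/-- `L_S(g)`: empirical frequency of `g` on all `k`-tuples from the sample `S`. -/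
noncomputable def LS {V : Type*} {k m : ℕ} (S : Fin m → V) (g : (Fin k → V) → Bool) : ℝ :=
  (∑ t : Fin k → Fin m, if g (S ∘ t) then (1 : ℝ) else 0) / (m : ℝ) ^ k

/-- Probability of an event `E` under an i.i.d. sample of size `m` from `p`. -/
noncomputable def Prob {V : Type*} (p : V → ℝ) {m : ℕ} (E : Set (Fin m → V)) : ℝ :=
  ∑' S : Fin m → V, E.indicator (fun S => ∏ i, p (S i)) S

/-- Probability of an event `E` under two independent i.i.d. samples of size `m`. -/
noncomputable def Prob2 {V : Type*} (p₁ p₂ : V → ℝ) {m : ℕ}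
    (E : Set ((Fin m → V) × (Fin m → V))) : ℝ :=
  ∑' S : (Fin m → V) × (Fin m → V),
    E.indicator (fun S => (∏ i, p₁ (S.1 i)) * ∏ i, p₂ (S.2 i)) S

/-- IPM distance induced by a class of `k`-ary distinguishers. -/
noncomputable def IPM {V : Type*} {k : ℕ} (G : Set ((Fin k → V) → Bool))
    (p₁ p₂ : V → ℝ) : ℝ :=
  ⨆ g ∈ G, |LP p₁ g - LP p₂ g|

/-- `L_P(d)` for a unary Boolean function `d`. -/
noncomputable def LP1 {V : Type*} (p : V → ℝ) (d : V → Bool) : ℝ :=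
  ∑' v : V, p v * (if d v then 1 else 0)

/-- IPM distance for a family of unary Boolean functions. -/
noncomputable def IPM1 {V : Type*} (D : Set (V → Bool)) (p₁ p₂ : V → ℝ) : ℝ :=
  ⨆ d ∈ D, |LP1 p₁ d - LP1 p₂ d|

/-- `L_P(g)` for a binary (curried) Boolean function `g`. -/
noncomputable def LP2 {V : Type*} (p : V → ℝ) (g : V → V → Bool) : ℝ :=
  ∑' w : V × V, (p w.1 * p w.2) * (if g w.1 w.2 then 1 else 0)

/-- `D` shatters the finite set `T`: every Boolean pattern on `T` is realized in `D`. -/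
def Shatters {X : Type*} (D : Set (X → Bool)) (T : Finset X) : Prop :=
  ∀ f : X → Bool, ∃ d ∈ D, ∀ x ∈ T, d x = f x

/-- The VC dimension of a family of Boolean functions. -/
noncomputable def vcDim {X : Type*} (D : Set (X → Bool)) : ℕ∞ :=
  ⨆ T ∈ {T : Finset X | Shatters D T}, (T.card : ℕ∞)

/-- Fixing the first argument of a `(k+1)`-ary function to `v`. -/
def proj {V : Type*} {k : ℕ} (v : V) (g : (Fin (k + 1) → V) → Bool) :
    (Fin k → V) → Bool := fun u => g (Fin.cons v u)

/-- The graph VC dimension, defined inductively: for `k = 1` it is the usual VC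
dimension; for `k > 1` it is the supremum over `v` of the graph VC dimension of the
projected class `G_v`. -/
noncomputable def gvcDim {V : Type*} : (k : ℕ) → Set ((Fin k → V) → Bool) → ℕ∞
  | 0, G => vcDim G
  | 1, G => vcDim G
  | (k + 2), G => ⨆ v : V, gvcDim (k + 1) (proj v '' G)

open Classical in
/-- Mixture `q·δ_v + (1−q)·p`. -/
noncomputable def mix {V : Type*} (q : ℝ) (v : V) (p : V → ℝ) : V → ℝ :=
  fun u => q * (if u = v then 1 else 0) + (1 - q) * p u

/-- The class of majority-vote threshold functions over `m`-tuples from `D`. -/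
noncomputable def thresholdClass {V : Type*} (D : Set (V → Bool)) (m : ℕ) :
    Set (V → Bool) :=
  {h | ∃ d : Fin m → (V → Bool), (∀ i, d i ∈ D) ∧
        h = fun v => decide ((0 : ℝ) ≤ ∑ i, (2 * (if d i v then (1 : ℝ) else 0) - 1))}


open Polynomial Finset

private lemma coeff_prod_bound {ι : Type*} (t : Finset ι) (c : ι → ℝ) (hc : ∀ i ∈ t, |c i| ≤ 1) :
    ∀ m, |(∏ i ∈ t, (X - C (c i))).coeff m| ≤ 2 ^ t.card := by
  induction t using Finset.cons_induction with
  | empty =>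
    intro m
    simp only [prod_empty, coeff_one, card_empty, pow_zero]
    split <;> simp
  | cons a t ha ih =>
    intro m
    have hc' : ∀ i ∈ t, |c i| ≤ 1 := fun i hi => hc i (mem_cons_of_mem hi)
    have ihm := ih hc'
    rw [prod_cons]
    have hkey : ((X - C (c a)) * ∏ i ∈ t, (X - C (c i))).coeff m =
        (X * ∏ i ∈ t, (X - C (c i))).coeff m - c a * (∏ i ∈ t, (X - C (c i))).coeff m := by
      rw [sub_mul, coeff_sub, coeff_C_mul]
    rw [hkey, card_cons, pow_succ]
    have h2 : |(X * ∏ i ∈ t, (X - C (c i))).coeff m| ≤ 2 ^ t.card := by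
      cases m with
      | zero => simp [coeff_mul, Finset.Nat.antidiagonal_zero]
      | succ n => rw [coeff_X_mul]; exact ihm n
    calc |(X * ∏ i ∈ t, (X - C (c i))).coeff m - c a * (∏ i ∈ t, (X - C (c i))).coeff m|
        ≤ |(X * ∏ i ∈ t, (X - C (c i))).coeff m| + |c a| * |(∏ i ∈ t, (X - C (c i))).coeff m| := by
          rw [← abs_mul]; exact abs_sub _ _
      _ ≤ 2 ^ t.card + 1 * 2 ^ t.card :=
          add_le_add h2 (mul_le_mul (hc a (mem_cons_self a t)) (ihm m) (abs_nonneg _) zero_le_one)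
      _ = 2 ^ t.card * 2 := by ring


/-- the Vandermonde polynomial claim (Claim `vandermonde`). -/
theorem stmt7 (k : ℕ) (hk : 1 ≤ k) (a₀ a₁ : ℝ) (p : Polynomial ℝ)
    (hp : 2 + p.degree ≤ (k : WithBot ℕ)) :
    ∃ j : ℕ, j ≤ k ∧
      |a₀ + a₁ * ((j : ℝ) / k) + ((j : ℝ) / k) ^ 2 * p.eval ((j : ℝ) / k)|
        ≥ |a₁| / 2 ^ (3 * k ^ 2) := by
  classical
  have hk0 : (0:ℝ) < k := by exact_mod_cast hk
  set f : Polynomial ℝ := C a₀ + C a₁ * X + X ^ 2 * p with hf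
  set v : ℕ → ℝ := fun j => (j : ℝ) / k with hv
  set s : Finset ℕ := Finset.range (k + 1) with hs
  have hvs : Set.InjOn v s := by
    intro i hi j hj hij
    have : (i : ℝ) = j := by
      simp only [hv] at hij; rw [div_left_inj' hk0.ne'] at hij; exact_mod_cast hij
    exact_mod_cast this
  have hdeg : f.degree < (s.card : ℕ) := by
    have h1 : (C a₀).degree ≤ (k : WithBot ℕ) := le_trans degree_C_le (by exact_mod_cast Nat.zero_le k)
    have h2 : (C a₁ * X).degree ≤ (k : WithBot ℕ) := by
      refine le_trans (degree_mul_le _ _) ?_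
      refine le_trans (add_le_add degree_C_le degree_X_le) ?_
      simpa using (by exact_mod_cast hk : (1 : WithBot ℕ) ≤ (k : WithBot ℕ))
    have h3 : (X ^ 2 * p).degree ≤ (k : WithBot ℕ) := by
      refine le_trans (degree_mul_le _ _) (le_trans ?_ hp)
      gcongr
      simpa using degree_X_pow_le (R := ℝ) 2
    have : f.degree ≤ (k : WithBot ℕ) :=
      le_trans (degree_add_le _ _) (max_le (le_trans (degree_add_le _ _) (max_le h1 h2)) h3)
    refine lt_of_le_of_lt this ?_
    rw [hs, Finset.card_range]
    exact_mod_cast WithBot.coe_lt_coe.mpr (Nat.lt_succ_self k)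
  have hinterp := Lagrange.eq_interpolate hvs hdeg
  -- coefficient 1
  have ha1 : a₁ = ∑ i ∈ s, f.eval (v i) * (Lagrange.basis s v i).coeff 1 := by
    have hc1 : f.coeff 1 = a₁ := by
      simp [hf, coeff_add, coeff_C, coeff_C_mul, coeff_X, mul_comm (X ^ 2) p,
        coeff_mul_X_pow']
    conv_lhs => rw [← hc1, hinterp]
    rw [Lagrange.interpolate_apply, Polynomial.finset_sum_coeff]
    exact Finset.sum_congr rfl fun i _ => by rw [coeff_C_mul]
  -- bound on basis coefficients
  have hbasis : ∀ i ∈ s, |(Lagrange.basis s v i).coeff 1| ≤ (k:ℝ) ^ k * 2 ^ k := by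
    intro i hi
    have hcard : (s.erase i).card = k := by
      rw [Finset.card_erase_of_mem hi, hs, Finset.card_range]; omega
    have hrw : Lagrange.basis s v i =
        C (∏ j ∈ s.erase i, (v i - v j)⁻¹) * ∏ j ∈ s.erase i, (X - C (v j)) := by
      rw [Lagrange.basis]
      simp_rw [Lagrange.basisDivisor]
      rw [Finset.prod_mul_distrib, map_prod]
    rw [hrw, coeff_C_mul, abs_mul]
    have hb1 : |∏ j ∈ s.erase i, (v i - v j)⁻¹| ≤ (k:ℝ) ^ k := by
      rw [abs_prod]
      calc ∏ j ∈ s.erase i, |(v i - v j)⁻¹| ≤ ∏ _j ∈ s.erase i, (k:ℝ) := by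
            refine Finset.prod_le_prod (fun _ _ => abs_nonneg _) ?_
            intro j hj
            have hij : j ≠ i := (Finset.mem_erase.mp hj).1
            have h1 : (1:ℝ) ≤ |(i:ℝ) - (j:ℝ)| := by
              have hz : (1:ℤ) ≤ |(i:ℤ) - (j:ℤ)| := by
                refine Int.one_le_abs ?_
                simpa using sub_ne_zero_of_ne (fun h => hij (by exact_mod_cast h.symm))
              exact_mod_cast hz
            have hvv : v i - v j = ((i:ℝ) - (j:ℝ)) / k := by
              simp only [hv]; ring
            have hge : (1:ℝ)/k ≤ |v i - v j| := by
              rw [hvv, abs_div, abs_of_pos hk0]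
              gcongr
            have hpos : (0:ℝ) < |v i - v j| := lt_of_lt_of_le (by positivity) hge
            rw [abs_inv]
            calc |v i - v j|⁻¹ ≤ ((1:ℝ)/k)⁻¹ := by
                  exact inv_anti₀ (by positivity) hge
              _ = k := by simp
          _ = (k:ℝ) ^ k := by rw [Finset.prod_const, hcard]
    have hb2 : |(∏ j ∈ s.erase i, (X - C (v j))).coeff 1| ≤ 2 ^ k := by
      have hle : ∀ j ∈ s.erase i, |v j| ≤ 1 := by
        intro j hj
        have hjk : j ≤ k := by
          have := Finset.mem_range.mp (Finset.mem_of_mem_erase hj)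
          omega
        rw [hv, abs_div, abs_of_pos hk0, abs_of_nonneg (by positivity : (0:ℝ) ≤ (j:ℝ))]
        rw [div_le_one hk0]
        exact_mod_cast hjk
      have := coeff_prod_bound (s.erase i) v hle 1
      rwa [hcard] at this
    exact mul_le_mul hb1 hb2 (abs_nonneg _) (by positivity)
  -- pick maximizer
  obtain ⟨i₀, hi₀s, hi₀max⟩ := s.exists_max_image (fun i => |f.eval (v i)|)
    ⟨0, by simp [hs]⟩
  set M := |f.eval (v i₀)| with hM
  have hMnn : 0 ≤ M := abs_nonneg _
  have hsum : |a₁| ≤ (k+1 : ℝ) * ((k:ℝ) ^ k * 2 ^ k) * M := by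
    rw [ha1]
    calc |∑ i ∈ s, f.eval (v i) * (Lagrange.basis s v i).coeff 1|
        ≤ ∑ i ∈ s, |f.eval (v i) * (Lagrange.basis s v i).coeff 1| :=
          Finset.abs_sum_le_sum_abs _ _
      _ ≤ ∑ _i ∈ s, M * ((k:ℝ) ^ k * 2 ^ k) := by
          refine Finset.sum_le_sum fun i hi => ?_
          rw [abs_mul]
          exact mul_le_mul (hi₀max i hi) (hbasis i hi) (abs_nonneg _) hMnn
      _ = (k+1 : ℝ) * ((k:ℝ) ^ k * 2 ^ k) * M := by
          rw [Finset.sum_const, hs, Finset.card_range]; push_cast; ring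
  have hconst : (k+1 : ℝ) * ((k:ℝ) ^ k * 2 ^ k) ≤ 2 ^ (3 * k ^ 2) := by
    have h1 : (k+1 : ℕ) ≤ 2 ^ k := Nat.succ_le_of_lt (Nat.lt_two_pow_self (n := k))
    have h2 : (k : ℕ) ^ k ≤ 2 ^ (k * k) := by
      calc k ^ k ≤ (2 ^ k) ^ k := Nat.pow_le_pow_left (le_of_lt (Nat.lt_two_pow_self (n := k))) k
        _ = 2 ^ (k * k) := by rw [← pow_mul]
    have : (k+1) * (k ^ k * 2 ^ k) ≤ 2 ^ (3 * k ^ 2) := by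
      calc (k+1) * (k ^ k * 2 ^ k) ≤ 2 ^ k * (2 ^ (k*k) * 2 ^ k) := by
            exact Nat.mul_le_mul h1 (Nat.mul_le_mul h2 (le_refl _))
        _ = 2 ^ (k + (k*k + k)) := by rw [← pow_add, ← pow_add]
        _ ≤ 2 ^ (3 * k ^ 2) := by
            refine Nat.pow_le_pow_right (by norm_num) ?_
            nlinarith
    exact_mod_cast this
  have hfinal : |a₁| ≤ 2 ^ (3 * k ^ 2) * M :=
    le_trans hsum (mul_le_mul_of_nonneg_right hconst hMnn)
  refine ⟨i₀, by have := Finset.mem_range.mp hi₀s; omega, ?_⟩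
  have heval : f.eval (v i₀) = a₀ + a₁ * ((i₀ : ℝ) / k) + ((i₀ : ℝ) / k) ^ 2 * p.eval ((i₀ : ℝ) / k) := by
    simp [hf, hv]
  rw [ge_iff_le, div_le_iff₀ (by positivity)]
  rw [← heval]
  linarith [hfinal]

end GraphDisc
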